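/- Let c ≥ 1, let ζ be a primitive 2c-th root of unity in ℂ, and let P ∈ ℤ[ζ][x]. Define Q(P,n) = ∑_{m=0}^{n} ζ^m P(m) binom(n,m)_q. Then for all n ≥ 2, Q(P(x),n) = Q(P(x) + ζ·P(x+1), n-1) − ζ(1-q^{n-1})·Q(P(x+1), n-2). -/

import Mathlib

open Polynomial Finset

/-- The Gaussian (q-)binomial coefficient as a polynomial, satisfying the
product formula `∏_{i=n-m+1}^{n}(1-q^i) / ∏_{i=1}^{m}(1-q^i)`. -/
noncomputable def qbinom (R : Type*) [CommRing R] : ℕ → ℕ → Polynomial R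
  | _, 0 => 1
  | 0, _+1 => 0
  | n+1, m+1 => qbinom R n (m+1) + X ^ (n - m) * qbinom R n m

lemma qbinom_pascal (R : Type*) [CommRing R] (n m : ℕ) :
    qbinom R (n+1) (m+1) = qbinom R n (m+1) + X ^ (n - m) * qbinom R n m := rfl

lemma qbinom_zero_right (R : Type*) [CommRing R] (n : ℕ) : qbinom R n 0 = 1 := by
  cases n <;> rfl

lemma qbinom_eq_zero (R : Type*) [CommRing R] : ∀ n m : ℕ, n < m → qbinom R n m = 0 := by
  intro n
  induction n with
  | zero => intro m hm; match m, hm with | m+1, _ => rfl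
  | succ n ih =>
    intro m hm
    match m, hm with
    | m+1, hm =>
      rw [qbinom_pascal, ih (m+1) (by omega), ih m (by omega)]
      ring

lemma qbinom_diag (R : Type*) [CommRing R] (n : ℕ) : qbinom R n n = 1 := by
  induction n with
  | zero => rfl
  | succ n ih =>
    rw [qbinom_pascal, ih, qbinom_eq_zero R n (n+1) (by omega)]
    simp

lemma qbinom_prod (R : Type*) [CommRing R] : ∀ m d : ℕ,
    qbinom R (d + m) m * ∏ i ∈ range m, (1 - X ^ (i+1)) =
      ∏ i ∈ range m, (1 - (X : Polynomial R) ^ (d + i + 1)) := by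
  intro m
  induction m with
  | zero => intro d; simp [qbinom_zero_right]
  | succ j ihm =>
    intro d
    induction d with
    | zero => simp [qbinom_diag]
    | succ e ihd =>
      have hp : qbinom R (e + 1 + (j+1)) (j+1)
          = qbinom R (e + (j+1)) (j+1) + X ^ (e+1) * qbinom R (e + 1 + j) j := by
        have h1 : e + 1 + (j + 1) = (e + 1 + j) + 1 := by ring
        rw [h1, qbinom_pascal]
        have h2 : e + 1 + j - j = e + 1 := by omega
        have h3 : e + 1 + j = e + (j + 1) := by ring
        rw [h2, h3]
      have h1 : ∏ i ∈ range (j+1), (1 - (X : Polynomial R) ^ (e + i + 1))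
          = (1 - X ^ (e+1)) * ∏ i ∈ range j, (1 - X ^ (e + 1 + i + 1)) := by
        rw [prod_range_succ']
        have hc : ∀ i ∈ range j,
            (1 - (X : Polynomial R) ^ (e + (i+1) + 1)) = (1 - X ^ (e + 1 + i + 1)) := by
          intro i _
          have : e + (i+1) + 1 = e + 1 + i + 1 := by omega
          rw [this]
        rw [prod_congr rfl hc]
        have : e + 0 + 1 = e + 1 := by omega
        rw [this, mul_comm]
      calc qbinom R (e + 1 + (j+1)) (j+1) * ∏ i ∈ range (j+1), (1 - (X : Polynomial R) ^ (i+1))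
          = qbinom R (e + (j+1)) (j+1) * ∏ i ∈ range (j+1), (1 - X ^ (i+1))
            + X ^ (e+1) * ((qbinom R (e+1+j) j * ∏ i ∈ range j, (1 - X ^ (i+1))) * (1 - X ^ (j+1))) := by
            rw [hp, prod_range_succ]; ring
        _ = (1 - X ^ (e+1)) * (∏ i ∈ range j, (1 - (X : Polynomial R) ^ (e + 1 + i + 1)))
            + X ^ (e+1) * ((∏ i ∈ range j, (1 - (X : Polynomial R) ^ (e + 1 + i + 1))) * (1 - X ^ (j+1))) := by
            rw [ihd, ihm (e+1), h1]
        _ = ∏ i ∈ range (j+1), (1 - (X : Polynomial R) ^ (e + 1 + i + 1)) := by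
            rw [prod_range_succ]; ring

lemma one_sub_X_pow_ne_zero (R : Type*) [CommRing R] [Nontrivial R] (i : ℕ) :
    (1 - (X : Polynomial R) ^ (i+1)) ≠ 0 := by
  intro h
  have := congrArg (fun p => Polynomial.coeff p (i+1)) h
  simp [coeff_one, Nat.succ_ne_zero] at this

lemma qbinom_key (R : Type*) [CommRing R] [IsDomain R] (n m : ℕ) (hm : m ≤ n + 1) :
    (1 - (X : Polynomial R) ^ (n + 1 - m)) * qbinom R (n+1) m
      = (1 - X ^ (n+1)) * qbinom R n m := by
  rcases eq_or_lt_of_le hm with h | h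
  · subst h
    simp [qbinom_eq_zero R n (n+1) (by omega)]
  · obtain ⟨d, rfl⟩ : ∃ d, n = d + m := ⟨n - m, by omega⟩
    have hprod : (∏ i ∈ range m, (1 - (X : Polynomial R) ^ (i+1))) ≠ 0 :=
      prod_ne_zero_iff.mpr fun i _ => one_sub_X_pow_ne_zero R i
    apply mul_right_cancel₀ hprod
    have e1 : d + m + 1 - m = d + 1 := by omega
    have e2 : d + m + 1 = (d + 1) + m := by ring
    rw [e1, e2]
    calc (1 - (X : Polynomial R) ^ (d+1)) * qbinom R ((d+1) + m) m * ∏ i ∈ range m, (1 - X ^ (i+1))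
        = (1 - X ^ (d+1)) * (qbinom R ((d+1) + m) m * ∏ i ∈ range m, (1 - X ^ (i+1))) := by ring
      _ = (1 - X ^ (d+1)) * ∏ i ∈ range m, (1 - (X : Polynomial R) ^ (d + 1 + i + 1)) := by
          rw [qbinom_prod]
      _ = ∏ i ∈ range (m+1), (1 - (X : Polynomial R) ^ (d + i + 1)) := by
          rw [prod_range_succ']
          have hc : ∀ i ∈ range m,
              (1 - (X : Polynomial R) ^ (d + (i+1) + 1)) = (1 - X ^ (d + 1 + i + 1)) := by
            intro i _
            have : d + (i+1) + 1 = d + 1 + i + 1 := by omega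
            rw [this]
          rw [prod_congr rfl hc]
          have : d + 0 + 1 = d + 1 := by omega
          rw [this, mul_comm]
      _ = (∏ i ∈ range m, (1 - (X : Polynomial R) ^ (d + i + 1))) * (1 - X ^ ((d+1)+m)) := by
          rw [prod_range_succ]
          have : d + m + 1 = d + 1 + m := by omega
          rw [this]
      _ = (1 - X ^ ((d+1)+m)) * (qbinom R (d + m) m * ∏ i ∈ range m, (1 - X ^ (i+1))) := by
          rw [qbinom_prod]; ring
      _ = (1 - X ^ ((d+1) + m)) * qbinom R (d + m) m * ∏ i ∈ range m, (1 - X ^ (i+1)) := by ring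

lemma Qsum_aux (R : Type*) [CommRing R] [IsDomain R] (f : ℕ → Polynomial R) (k : ℕ) :
    ∑ m ∈ range (k+3), f m * qbinom R (k+2) m
      = ∑ m ∈ range (k+2), (f m + f (m+1)) * qbinom R (k+1) m
        - (1 - X ^ (k+1)) * ∑ m ∈ range (k+1), f (m+1) * qbinom R k m := by
  have step : ∀ j ∈ range (k+2), f (j+1) * qbinom R (k+2) (j+1)
      = f (j+1) * qbinom R (k+1) (j+1) + f (j+1) * qbinom R (k+1) j
        - (1 - X ^ (k+1)) * (f (j+1) * qbinom R k j) := by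
    intro j hj
    have hj' : j ≤ k + 1 := by have := mem_range.mp hj; omega
    have hp : qbinom R (k+2) (j+1)
        = qbinom R (k+1) (j+1) + X ^ (k + 1 - j) * qbinom R (k+1) j :=
      qbinom_pascal R (k+1) j
    have hk := qbinom_key R k j hj'
    rw [hp]
    linear_combination (-(f (j+1))) * hk
  calc ∑ m ∈ range (k+3), f m * qbinom R (k+2) m
      = (∑ j ∈ range (k+2), f (j+1) * qbinom R (k+2) (j+1)) + f 0 * qbinom R (k+2) 0 :=
        Finset.sum_range_succ' _ (k+2)
    _ = (∑ j ∈ range (k+2), (f (j+1) * qbinom R (k+1) (j+1) + f (j+1) * qbinom R (k+1) j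
          - (1 - X ^ (k+1)) * (f (j+1) * qbinom R k j))) + f 0 := by
        rw [Finset.sum_congr rfl step, qbinom_zero_right, mul_one]
    _ = ((∑ j ∈ range (k+2), f (j+1) * qbinom R (k+1) (j+1)) + f 0 * qbinom R (k+1) 0)
        + (∑ j ∈ range (k+2), f (j+1) * qbinom R (k+1) j)
        - (1 - X ^ (k+1)) * (∑ j ∈ range (k+2), f (j+1) * qbinom R k j) := by
        rw [Finset.sum_sub_distrib, Finset.sum_add_distrib, ← Finset.mul_sum,
          qbinom_zero_right, mul_one]
        ring
    _ = (∑ m ∈ range (k+3), f m * qbinom R (k+1) m)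
        + (∑ j ∈ range (k+2), f (j+1) * qbinom R (k+1) j)
        - (1 - X ^ (k+1)) * (∑ j ∈ range (k+2), f (j+1) * qbinom R k j) := by
        rw [Finset.sum_range_succ' (fun m => f m * qbinom R (k+1) m) (k+2)]
    _ = (∑ m ∈ range (k+2), f m * qbinom R (k+1) m)
        + (∑ m ∈ range (k+2), f (m+1) * qbinom R (k+1) m)
        - (1 - X ^ (k+1)) * (∑ m ∈ range (k+1), f (m+1) * qbinom R k m) := by
        rw [Finset.sum_range_succ (fun m => f m * qbinom R (k+1) m) (k+2),
          Finset.sum_range_succ (fun j => f (j+1) * qbinom R k j) (k+1),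
          qbinom_eq_zero R (k+1) (k+2) (by omega),
          qbinom_eq_zero R k (k+1) (by omega)]
        ring
    _ = ∑ m ∈ range (k+2), (f m + f (m+1)) * qbinom R (k+1) m
        - (1 - X ^ (k+1)) * ∑ m ∈ range (k+1), f (m+1) * qbinom R k m := by
        rw [← Finset.sum_add_distrib]
        congr 1
        apply Finset.sum_congr rfl
        intro m _
        ring

/-- The subring ℤ[ζ] of ℂ. -/
noncomputable abbrev Zadj (ζ : ℂ) : Type := Algebra.adjoin ℤ ({ζ} : Set ℂ)

/-- ζ as an element of ℤ[ζ]. -/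
noncomputable def zeta (ζ : ℂ) : Zadj ζ := ⟨ζ, Algebra.self_mem_adjoin_singleton ℤ ζ⟩

/-- `Q(P,n) = ∑_{m=0}^{n} ζ^m P(m) binom(n,m)_q` in ℤ[ζ][q]. -/
noncomputable def Qsum (ζ : ℂ) (P : Polynomial (Zadj ζ)) (n : ℕ) : Polynomial (Zadj ζ) :=
  ∑ m ∈ Finset.range (n + 1), C (zeta ζ ^ m * P.eval (m : Zadj ζ)) * qbinom (Zadj ζ) n m

theorem Qsum_recursion (c : ℕ) (hc : 1 ≤ c) (ζ : ℂ) (hζ : IsPrimitiveRoot ζ (2 * c))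
    (P : Polynomial (Zadj ζ)) (n : ℕ) (hn : 2 ≤ n) :
    Qsum ζ P n =
      Qsum ζ (P + C (zeta ζ) * P.comp (X + 1)) (n - 1) -
        C (zeta ζ) * (1 - X ^ (n - 1)) * Qsum ζ (P.comp (X + 1)) (n - 2) := by
  obtain ⟨k, rfl⟩ : ∃ k, n = k + 2 := ⟨n - 2, by omega⟩
  have h1 : k + 2 - 1 = k + 1 := rfl
  have h2 : k + 2 - 2 = k := rfl
  rw [h1, h2]
  unfold Qsum
  have haux := Qsum_aux (Zadj ζ) (fun m => C (zeta ζ ^ m * P.eval (m : Zadj ζ))) k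
  rw [show k + 2 + 1 = k + 3 from rfl, haux]
  refine congrArg₂ HSub.hSub ?_ ?_
  · apply Finset.sum_congr rfl
    intro m _
    congr 1
    simp only [eval_add, eval_mul, eval_comp, eval_X, eval_one, eval_C]
    rw [show ((m : Zadj ζ) + 1) = ((m + 1 : ℕ) : Zadj ζ) from by push_cast; ring]
    rw [← C_add]
    congr 1
    ring
  · have hs : (∑ m ∈ range (k+1),
        C (zeta ζ ^ (m+1) * P.eval ((m+1 : ℕ) : Zadj ζ)) * qbinom (Zadj ζ) k m)
        = C (zeta ζ) * ∑ m ∈ range (k+1),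
            C (zeta ζ ^ m * (P.comp (X + 1)).eval ((m : ℕ) : Zadj ζ)) * qbinom (Zadj ζ) k m := by
      rw [Finset.mul_sum]
      apply Finset.sum_congr rfl
      intro m _
      simp only [eval_comp, eval_add, eval_X, eval_one]
      rw [show ((m : Zadj ζ) + 1) = ((m + 1 : ℕ) : Zadj ζ) from by push_cast; ring]
      rw [← mul_assoc, ← C_mul]
      congr 2
      ring
    rw [hs]
    ring
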